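/- Let B be a commutative ℚ-algebra and let R = B[[X₁, …, X_n]] be the formal power series ring. Consider the formal de Rham complex 0 → B → R →^d Ω¹ →^d Ω² → ⋯ → Ωⁿ → 0, where Ω^j = ⋀^j (⊕_{i=1}^n R dX_i) and d is the usual exterior derivative determined by d(f) = Σ_i (∂f/∂X_i) dX_i. Then this complex is exact: H⁰ = B and the cohomology vanishes in all positive degrees. -/

import Mathlib

set_option linter.unusedSectionVars false

noncomputable def psPDeriv {n : ℕ} {B : Type*} [CommRing B]
    (i : Fin n) (f : MvPowerSeries (Fin n) B) : MvPowerSeries (Fin n) B :=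
  fun m => (m i + 1 : ℕ) • MvPowerSeries.coeff (m + Finsupp.single i 1) f

noncomputable def formD {n : ℕ} {B : Type*} [CommRing B] (j : ℕ)
    (ω : {T : Finset (Fin n) // T.card = j} → MvPowerSeries (Fin n) B) :
    {T : Finset (Fin n) // T.card = j + 1} → MvPowerSeries (Fin n) B :=
  fun T => ∑ i ∈ T.1.attach,
    ((-1 : ℤ) ^ (T.1.filter (fun k => k < i.1)).card) •
      psPDeriv i.1 (ω ⟨T.1.erase i.1, by
        simp [Finset.card_erase_of_mem i.2, T.2]⟩)

namespace PoincareAux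

variable {n : ℕ} {B : Type*} [CommRing B]

/-- sign of `i` relative to `S` -/
def sgn (S : Finset (Fin n)) (i : Fin n) : ℤ := (-1) ^ ((S.filter (fun k => k < i)).card)

lemma sgn_mul_self (S : Finset (Fin n)) (i : Fin n) : sgn S i * sgn S i = 1 := by
  rw [sgn, ← pow_add]; exact Even.neg_one_pow ⟨_, rfl⟩

lemma sgn_erase_self (S : Finset (Fin n)) (i : Fin n) : sgn (S.erase i) i = sgn S i := by
  unfold sgn
  rw [Finset.filter_erase, Finset.erase_eq_of_notMem (by simp)]

lemma sgn_insert_self (S : Finset (Fin n)) (l : Fin n) : sgn (insert l S) l = sgn S l := by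
  unfold sgn
  rw [Finset.filter_insert, if_neg (lt_irrefl l)]

lemma sign_rel {T : Finset (Fin n)} {i l : Fin n} (hi : i ∈ T) (hl : l ∉ T) :
    sgn T i * sgn (T.erase i) l = -(sgn (insert l T) l * sgn (insert l T) i) := by
  have hil : i ≠ l := fun h => hl (h ▸ hi)
  rw [sgn_insert_self]
  unfold sgn
  rw [Finset.filter_erase, Finset.filter_insert]
  rcases hil.lt_or_gt with hlt | hlt
  · rw [if_neg (asymm hlt)]
    have hmem : i ∈ T.filter (fun k => k < l) := Finset.mem_filter.mpr ⟨hi, hlt⟩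
    rw [Finset.card_erase_of_mem hmem]
    obtain ⟨c, hc⟩ : ∃ c, (T.filter (fun k => k < l)).card = c + 1 :=
      ⟨(T.filter (fun k => k < l)).card - 1, by
        have := Finset.card_pos.mpr ⟨i, hmem⟩; omega⟩
    rw [hc, Nat.add_sub_cancel, pow_succ]
    ring
  · rw [if_pos hlt]
    rw [Finset.card_insert_of_notMem (fun hc => hl (Finset.mem_filter.mp hc).1)]
    rw [Finset.erase_eq_of_notMem (s := T.filter (fun k => k < l)) (a := i)
      (fun hc => absurd (Finset.mem_filter.mp hc).2 (asymm hlt))]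
    rw [pow_succ]
    ring

/-- extension of a `j`-form to all finsets, by zero -/
noncomputable def ext (j : ℕ)
    (ω : {T : Finset (Fin n) // T.card = j} → MvPowerSeries (Fin n) B) :
    Finset (Fin n) → (Fin n →₀ ℕ) → B :=
  fun S m => if h : S.card = j then ω ⟨S, h⟩ m else 0

lemma ext_pos (j : ℕ) (ω : {T : Finset (Fin n) // T.card = j} → MvPowerSeries (Fin n) B)
    {S : Finset (Fin n)} (h : S.card = j) (m : Fin n →₀ ℕ) :
    ext j ω S m = ω ⟨S, h⟩ m := dif_pos h

lemma formD_eq (j : ℕ) (ω : {T : Finset (Fin n) // T.card = j} → MvPowerSeries (Fin n) B)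
    (T : {T : Finset (Fin n) // T.card = j + 1}) (m : Fin n →₀ ℕ) :
    formD j ω T m = ∑ i ∈ T.1, ((-1 : ℤ) ^ (T.1.filter (fun k => k < i)).card) •
      ((m i + 1) • ext j ω (T.1.erase i) (m + Finsupp.single i 1)) := by
  have : formD j ω T m = MvPowerSeries.coeff m (formD j ω T) := rfl
  rw [this, formD, map_sum]
  rw [← Finset.sum_attach T.1 (fun i => ((-1 : ℤ) ^ (T.1.filter (fun k => k < i)).card) •
      ((m i + 1) • ext j ω (T.1.erase i) (m + Finsupp.single i 1)))]
  refine Finset.sum_congr rfl fun i _ => ?_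
  rw [map_zsmul]
  congr 1
  have h1 : MvPowerSeries.coeff m (psPDeriv i.1 (ω ⟨T.1.erase i.1, by
        simp [Finset.card_erase_of_mem i.2, T.2]⟩)) =
      (m i.1 + 1) • (ω ⟨T.1.erase i.1, by
        simp [Finset.card_erase_of_mem i.2, T.2]⟩) (m + Finsupp.single i.1 1) := rfl
  rw [h1, ext_pos j ω (by simp [Finset.card_erase_of_mem i.2, T.2])]

lemma formD_eq' (j : ℕ) (ω : {T : Finset (Fin n) // T.card = j} → MvPowerSeries (Fin n) B)
    (T : {T : Finset (Fin n) // T.card = j + 1}) (m : Fin n →₀ ℕ) :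
    formD j ω T m = ∑ i ∈ T.1, sgn T.1 i •
      ((m i + 1) • ext j ω (T.1.erase i) (m + Finsupp.single i 1)) :=
  formD_eq j ω T m

lemma cancel {B : Type*} [CommRing B] [Algebra ℚ B] {k : ℕ} {b : B}
    (h : (k + 1) • b = 0) : b = 0 := by
  have h2 : ((k + 1 : ℕ) : ℚ) • b = 0 := by rw [Nat.cast_smul_eq_nsmul]; exact_mod_cast h
  have h3 : (((k + 1 : ℕ) : ℚ))⁻¹ • (((k + 1 : ℕ) : ℚ) • b) = 0 := by rw [h2, smul_zero]
  rwa [smul_smul, inv_mul_cancel₀ (by exact_mod_cast k.succ_ne_zero), one_smul] at h3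

section Rational
variable [Algebra ℚ B]

lemma rearr1 (a : ℤ) (k : ℕ) (q : ℚ) (x : B) : a • (k • (q • x)) = q • (a • (k • x)) := by
  rw [smul_comm k q, smul_comm a q]

lemma rearr2 (a b : ℤ) (k : ℕ) (x : B) : k • ((-(a * b)) • x) = (-a) • (b • (k • x)) := by
  rw [smul_smul (-a) b, smul_comm k, neg_mul]

lemma rearr3 (a : ℤ) (y : B) : (-a) • (-(a • y)) = (a * a) • y := by
  rw [smul_neg, neg_smul, neg_neg, smul_smul]

/-- The homotopy: contraction with the Euler vector field, scaled by total weight. -/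
noncomputable def eta (j : ℕ)
    (ω : {T : Finset (Fin n) // T.card = j + 1} → MvPowerSeries (Fin n) B) :
    {S : Finset (Fin n) // S.card = j} → MvPowerSeries (Fin n) B :=
  fun S m' => (((∑ k, m' k) + j : ℕ) : ℚ)⁻¹ •
    ∑ l ∈ S.1ᶜ, sgn S.1 l •
      (if m' l = 0 then (0 : B) else ext (j + 1) ω (insert l S.1) (m' - Finsupp.single l 1))

theorem part2 (j : ℕ)
    (ω : {T : Finset (Fin n) // T.card = j + 1} → MvPowerSeries (Fin n) B)
    (h : formD (j + 1) ω = 0) :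
    ∃ η : {T : Finset (Fin n) // T.card = j} → MvPowerSeries (Fin n) B, formD j η = ω := by
  classical
  refine ⟨eta j ω, ?_⟩
  have hclosed : ∀ (T' : Finset (Fin n)) (hT' : T'.card = j + 1 + 1) (m' : Fin n →₀ ℕ),
      ∑ i ∈ T', sgn T' i •
        ((m' i + 1) • ext (j + 1) ω (T'.erase i) (m' + Finsupp.single i 1)) = 0 := by
    intro T' hT' m'
    have h0 : formD (j + 1) ω ⟨T', hT'⟩ m' = 0 := by rw [h]; rfl
    rw [formD_eq'] at h0
    exact h0
  funext T
  obtain ⟨Tset, hT⟩ := T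
  funext m
  set N : ℕ := (∑ k, m k) + j + 1 with hN
  have hNQ : ((N : ℚ)) ≠ 0 := Nat.cast_ne_zero.mpr (by omega)
  show formD j (eta j ω) ⟨Tset, hT⟩ m = ω ⟨Tset, hT⟩ m
  rw [formD_eq']
  set X : Fin n → Fin n → B := fun i l =>
    ext (j + 1) ω (insert l (Tset.erase i)) (m + Finsupp.single i 1 - Finsupp.single l 1)
    with hX
  have hstep : ∀ i ∈ Tset, ext j (eta j ω) (Tset.erase i) (m + Finsupp.single i 1) =
      (N : ℚ)⁻¹ • ∑ l ∈ (Tset.erase i)ᶜ, sgn (Tset.erase i) l •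
        (if (m + Finsupp.single i 1 : Fin n →₀ ℕ) l = 0 then (0 : B) else X i l) := by
    intro i hi
    have hcard : (Tset.erase i).card = j := by
      rw [Finset.card_erase_of_mem hi, hT]; rfl
    rw [ext_pos j (eta j ω) hcard]
    have hdeg : (∑ k, (m + Finsupp.single i 1 : Fin n →₀ ℕ) k) + j = N := by
      simp only [Finsupp.add_apply]
      rw [Finset.sum_add_distrib]
      have h1 : (∑ k, Finsupp.single i 1 k) = 1 := by
        simp [Finsupp.single_apply]
      omega
    simp only [eta, hX]
    rw [hdeg]
  have KEY : ∑ i ∈ Tset, sgn Tset i • ((m i + 1) •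
        ∑ l ∈ (Tset.erase i)ᶜ, sgn (Tset.erase i) l •
          (if (m + Finsupp.single i 1 : Fin n →₀ ℕ) l = 0 then (0 : B) else X i l))
      = N • ω ⟨Tset, hT⟩ m := by
    have hsplit : ∀ i ∈ Tset,
        sgn Tset i • ((m i + 1) •
          ∑ l ∈ (Tset.erase i)ᶜ, sgn (Tset.erase i) l •
            (if (m + Finsupp.single i 1 : Fin n →₀ ℕ) l = 0 then (0 : B) else X i l))
        = (m i + 1) • ω ⟨Tset, hT⟩ m +
          ∑ l ∈ Tsetᶜ, sgn Tset i • ((m i + 1) • (sgn (Tset.erase i) l •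
            (if (m + Finsupp.single i 1 : Fin n →₀ ℕ) l = 0 then (0 : B) else X i l))) := by
      intro i hi
      rw [Finset.compl_erase, Finset.sum_insert (by simp [hi])]
      have h1 : (m + Finsupp.single i 1 : Fin n →₀ ℕ) i = m i + 1 := by
        simp [Finsupp.add_apply]
      have h2 : X i i = ω ⟨Tset, hT⟩ m := by
        simp only [hX]
        rw [Finset.insert_erase hi, add_tsub_cancel_right, ext_pos (j + 1) ω hT]
      rw [h1, if_neg (Nat.succ_ne_zero (m i)), h2, sgn_erase_self]
      rw [smul_add, smul_add, Finset.smul_sum, Finset.smul_sum]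
      congr 1
      rw [smul_comm (sgn Tset i) (m i + 1), smul_smul, sgn_mul_self, one_smul]
    calc ∑ i ∈ Tset, sgn Tset i • ((m i + 1) •
            ∑ l ∈ (Tset.erase i)ᶜ, sgn (Tset.erase i) l •
              (if (m + Finsupp.single i 1 : Fin n →₀ ℕ) l = 0 then (0 : B) else X i l))
        = ∑ i ∈ Tset, ((m i + 1) • ω ⟨Tset, hT⟩ m +
            ∑ l ∈ Tsetᶜ, sgn Tset i • ((m i + 1) • (sgn (Tset.erase i) l •
              (if (m + Finsupp.single i 1 : Fin n →₀ ℕ) l = 0 then (0 : B) else X i l)))) :=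
          Finset.sum_congr rfl hsplit
      _ = (∑ i ∈ Tset, (m i + 1) • ω ⟨Tset, hT⟩ m) +
            ∑ l ∈ Tsetᶜ, ∑ i ∈ Tset, sgn Tset i • ((m i + 1) • (sgn (Tset.erase i) l •
              (if (m + Finsupp.single i 1 : Fin n →₀ ℕ) l = 0 then (0 : B) else X i l))) := by
          rw [Finset.sum_add_distrib, Finset.sum_comm]
      _ = (∑ i ∈ Tset, (m i + 1) • ω ⟨Tset, hT⟩ m) +
            ∑ l ∈ Tsetᶜ, m l • ω ⟨Tset, hT⟩ m := by
          congr 1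
          refine Finset.sum_congr rfl fun l hl => ?_
          have hl' : l ∉ Tset := Finset.mem_compl.mp hl
          have hml : ∀ i ∈ Tset, (m + Finsupp.single i 1 : Fin n →₀ ℕ) l = m l := by
            intro i hi
            have hne : i ≠ l := fun e => hl' (e ▸ hi)
            simp [Finsupp.add_apply, Finsupp.single_apply, hne]
          by_cases hml0 : m l = 0
          · rw [hml0, zero_smul]
            refine Finset.sum_eq_zero fun i hi => ?_
            rw [hml i hi, if_pos hml0]
            simp
          · have hle : Finsupp.single l 1 ≤ m :=
              Finsupp.single_le_iff.mpr (Nat.one_le_iff_ne_zero.mpr hml0)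
            have hT'c : (insert l Tset).card = j + 1 + 1 := by
              rw [Finset.card_insert_of_notMem hl', hT]
            have h0 := hclosed (insert l Tset) hT'c (m - Finsupp.single l 1)
            rw [Finset.sum_insert hl'] at h0
            have e1 : ((m - Finsupp.single l 1 : Fin n →₀ ℕ) l + 1) = m l := by
              rw [Finsupp.tsub_apply, Finsupp.single_eq_same]
              omega
            have e2 : (insert l Tset).erase l = Tset := Finset.erase_insert hl'
            have e3 : m - Finsupp.single l 1 + Finsupp.single l 1 = m :=
              tsub_add_cancel_of_le hle
            rw [e1, e2, e3, ext_pos (j + 1) ω hT] at h0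
            have hterm : ∀ i ∈ Tset,
                sgn (insert l Tset) i • (((m - Finsupp.single l 1 : Fin n →₀ ℕ) i + 1) •
                  ext (j + 1) ω ((insert l Tset).erase i)
                    (m - Finsupp.single l 1 + Finsupp.single i 1))
                = sgn (insert l Tset) i • ((m i + 1) • X i l) := by
              intro i hi
              have hne : l ≠ i := fun e => hl' (e ▸ hi)
              have f1 : (m - Finsupp.single l 1 : Fin n →₀ ℕ) i = m i := by
                rw [Finsupp.tsub_apply, Finsupp.single_apply, if_neg hne, tsub_zero]
              have f2 : (insert l Tset).erase i = insert l (Tset.erase i) :=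
                Finset.erase_insert_of_ne hne
              have f3 : m - Finsupp.single l 1 + Finsupp.single i 1
                  = m + Finsupp.single i 1 - Finsupp.single l 1 := tsub_add_eq_add_tsub hle
              rw [f1, f2, f3]
            rw [Finset.sum_congr rfl hterm] at h0
            have hsum : ∑ i ∈ Tset, sgn (insert l Tset) i • ((m i + 1) • X i l)
                = -(sgn (insert l Tset) l • ((m l) • ω ⟨Tset, hT⟩ m)) :=
              eq_neg_of_add_eq_zero_right h0
            calc ∑ i ∈ Tset, sgn Tset i • ((m i + 1) • (sgn (Tset.erase i) l •
                    (if (m + Finsupp.single i 1 : Fin n →₀ ℕ) l = 0 then (0 : B) else X i l)))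
                = ∑ i ∈ Tset, (-(sgn (insert l Tset) l)) •
                    (sgn (insert l Tset) i • ((m i + 1) • X i l)) := by
                  refine Finset.sum_congr rfl fun i hi => ?_
                  rw [hml i hi, if_neg hml0]
                  rw [smul_comm (sgn Tset i) (m i + 1),
                    smul_smul (sgn Tset i) (sgn (Tset.erase i) l), sign_rel hi hl']
                  rw [rearr2]
              _ = (-(sgn (insert l Tset) l)) •
                    ∑ i ∈ Tset, sgn (insert l Tset) i • ((m i + 1) • X i l) :=
                  (Finset.smul_sum).symm
              _ = m l • ω ⟨Tset, hT⟩ m := by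
                  rw [hsum, rearr3, sgn_mul_self, one_smul]
      _ = N • ω ⟨Tset, hT⟩ m := by
          rw [← Finset.sum_smul, ← Finset.sum_smul, ← add_smul]
          congr 1
          have h1 : ∑ i ∈ Tset, m i + ∑ l ∈ Tsetᶜ, m l = ∑ k, m k :=
            Finset.sum_add_sum_compl Tset m
          have h2 : ∑ i ∈ Tset, (m i + 1) = (∑ i ∈ Tset, m i) + (j + 1) := by
            rw [Finset.sum_add_distrib, Finset.sum_const, smul_eq_mul, mul_one, hT]
          omega
  calc ∑ i ∈ Tset, sgn Tset i •
          ((m i + 1) • ext j (eta j ω) (Tset.erase i) (m + Finsupp.single i 1))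
      = ∑ i ∈ Tset, (N : ℚ)⁻¹ • (sgn Tset i • ((m i + 1) •
          ∑ l ∈ (Tset.erase i)ᶜ, sgn (Tset.erase i) l •
            (if (m + Finsupp.single i 1 : Fin n →₀ ℕ) l = 0 then (0 : B) else X i l))) := by
        refine Finset.sum_congr rfl fun i hi => ?_
        rw [hstep i hi, rearr1]
    _ = (N : ℚ)⁻¹ • ∑ i ∈ Tset, sgn Tset i • ((m i + 1) •
          ∑ l ∈ (Tset.erase i)ᶜ, sgn (Tset.erase i) l •
            (if (m + Finsupp.single i 1 : Fin n →₀ ℕ) l = 0 then (0 : B) else X i l)) :=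
        (Finset.smul_sum).symm
    _ = (N : ℚ)⁻¹ • ((N : ℕ) • ω ⟨Tset, hT⟩ m) := by rw [KEY]
    _ = ω ⟨Tset, hT⟩ m := by
        rw [← Nat.cast_smul_eq_nsmul ℚ, smul_smul, inv_mul_cancel₀ hNQ, one_smul]

end Rational
end PoincareAux

theorem PoincareAux.part1 {n : ℕ} {B : Type*} [CommRing B] [Algebra ℚ B]
    (f : MvPowerSeries (Fin n) B) :
    formD 0 (fun _ => f) = 0 ↔ ∃ b : B, f = MvPowerSeries.C b := by
  constructor
  · intro h
    refine ⟨f 0, ?_⟩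
    ext m
    rw [MvPowerSeries.coeff_C, MvPowerSeries.coeff_apply]
    split_ifs with hm
    · rw [hm]
    · -- m ≠ 0, pick i with m i ≠ 0
      have : ∃ i, m i ≠ 0 := by
        by_contra hc
        push_neg at hc
        exact hm (Finsupp.ext hc)
      obtain ⟨i, hi⟩ := this
      have hle : Finsupp.single i 1 ≤ m := Finsupp.single_le_iff.mpr (Nat.one_le_iff_ne_zero.mpr hi)
      set m' : Fin n →₀ ℕ := m - Finsupp.single i 1 with hm'
      have hmm : m' + Finsupp.single i 1 = m := tsub_add_cancel_of_le hle
      have h0 : formD 0 (fun _ => f) ⟨{i}, Finset.card_singleton i⟩ m' = 0 := by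
        rw [h]; rfl
      rw [formD_eq] at h0
      simp only [Finset.sum_singleton, Finset.filter_singleton] at h0
      have hfilt : ¬ (i < i) := lt_irrefl i
      rw [if_neg hfilt] at h0
      simp only [Finset.card_empty, pow_zero, one_smul, Finset.erase_singleton] at h0
      rw [ext_pos 0 (fun _ => f) (Finset.card_empty) ] at h0
      rw [hmm] at h0
      exact cancel h0
  · rintro ⟨b, rfl⟩
    funext T
    funext m
    show formD 0 (fun _ => (MvPowerSeries.C b : MvPowerSeries (Fin n) B)) T m = 0
    rw [formD_eq]
    refine Finset.sum_eq_zero fun i hi => ?_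
    have : ext 0 (fun _ => (MvPowerSeries.C b : MvPowerSeries (Fin n) B)) (T.1.erase i) (m + Finsupp.single i 1) = 0 := by
      rw [ext]
      split_ifs with h
      · show MvPowerSeries.coeff (m + Finsupp.single i 1) (MvPowerSeries.C b : MvPowerSeries (Fin n) B) = 0
        rw [MvPowerSeries.coeff_C, if_neg]
        intro hc
        have := DFunLike.congr_fun hc i
        simp at this
      · rfl
    rw [this, smul_zero, smul_zero]

/-- Formal Poincaré lemma: for a commutative `ℚ`-algebra `B`, the formal de Rham complex
`0 → B → B[[X_1, …, X_n]] → Ω¹ → ⋯ → Ωⁿ → 0` is exact: the kernel of `d` in degree `0`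
consists exactly of the constants from `B`, and every closed form of positive degree is
exact. -/
theorem stmt_15 {n : ℕ} {B : Type*} [CommRing B] [Algebra ℚ B] :
    (∀ f : MvPowerSeries (Fin n) B,
      formD 0 (fun _ => f) = 0 ↔ ∃ b : B, f = (MvPowerSeries.C b : MvPowerSeries (Fin n) B)) ∧
    (∀ (j : ℕ) (ω : {T : Finset (Fin n) // T.card = j + 1} → MvPowerSeries (Fin n) B),
      formD (j + 1) ω = 0 →
      ∃ η : {T : Finset (Fin n) // T.card = j} → MvPowerSeries (Fin n) B,
        formD j η = ω) :=
  ⟨fun f => PoincareAux.part1 f, fun j ω h => PoincareAux.part2 j ω h⟩
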